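/- MLMC complexity bound, cost-dominated regime: assume β < γ and α ≥ β/2. Then there exists a constant C > 0, depending only on s, α, β, γ, c_α, c_β, c_γ, such that for every ε ∈ (0, √2·c_α), setting L := ⌈(1/α)·log_s(√2·c_α/ε)⌉, V_ℓ := c_β·s^{-β·ℓ}, C_ℓ := c_γ·s^{γ·ℓ}, and N_ℓ := ⌈2·ε^{-2}·√(V_ℓ/C_ℓ)·Σ_{i=0}^L √(V_i·C_i)⌉, the total MLMC cost satisfies Σ_{ℓ=0}^L N_ℓ·C_ℓ ≤ C·ε^{-2−(γ−β)/α}. -/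

import Mathlib

open Real Finset

/-- MLMC complexity bound in the cost-dominated regime (`β < γ`, `α ≥ β/2`):
there is a constant `C > 0` depending only on `s, α, β, γ, c_α, c_β, c_γ` such
that for every `ε ∈ (0, √2·c_α)`, with `L = ⌈(1/α)·log_s(√2·c_α/ε)⌉`,
`V_ℓ = c_β·s^{-β·ℓ}`, `C_ℓ = c_γ·s^{γ·ℓ}` and
`N_ℓ = ⌈2·ε⁻²·√(V_ℓ/C_ℓ)·∑_{i=0}^L √(V_i·C_i)⌉`, the total MLMC cost
satisfies `∑_{ℓ=0}^L N_ℓ·C_ℓ ≤ C·ε^{−2−(γ−β)/α}`. -/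
theorem mlmc_complexity_cost_dominated
    (s α β γ cα cβ cγ : ℝ) (hs : 1 < s) (hα : 0 < α) (hβ : 0 < β) (hγ : 0 < γ)
    (hcα : 0 < cα) (hcβ : 0 < cβ) (hcγ : 0 < cγ)
    (hβγ : β < γ) (hαβ : β / 2 ≤ α) :
    ∃ C > 0, ∀ ε : ℝ, 0 < ε → ε < Real.sqrt 2 * cα →
      ∀ L : ℕ, L = ⌈(1 / α) * Real.logb s (Real.sqrt 2 * cα / ε)⌉₊ →
      ∀ V Cost : ℕ → ℝ,
        (∀ ℓ, V ℓ = cβ * s ^ (-(β * (ℓ : ℝ)))) →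
        (∀ ℓ, Cost ℓ = cγ * s ^ (γ * (ℓ : ℝ))) →
      ∀ N : ℕ → ℕ,
        (∀ ℓ, N ℓ = ⌈2 * ε ^ (-2 : ℝ) * Real.sqrt (V ℓ / Cost ℓ)
          * ∑ i ∈ range (L + 1), Real.sqrt (V i * Cost i)⌉₊) →
      ∑ ℓ ∈ range (L + 1), (N ℓ : ℝ) * Cost ℓ
        ≤ C * ε ^ (-2 - (γ - β) / α) := by
  have hs0 : (0:ℝ) < s := lt_trans one_pos hs
  set M : ℝ := Real.sqrt 2 * cα with hMdef
  have hM0 : 0 < M := mul_pos (Real.sqrt_pos.mpr two_pos) hcα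
  set r : ℝ := s ^ ((γ - β)/2) with hrdef
  have hr1 : 1 < r := by
    rw [hrdef]
    exact Real.one_lt_rpow_iff_of_pos hs0 |>.mpr (Or.inl ⟨hs, by linarith⟩)
  set u : ℝ := s ^ γ with hudef
  have hu1 : 1 < u := by
    rw [hudef]
    exact Real.one_lt_rpow_iff_of_pos hs0 |>.mpr (Or.inl ⟨hs, hγ⟩)
  have hr0 : (0:ℝ) < r := lt_trans one_pos hr1
  have hu0 : (0:ℝ) < u := lt_trans one_pos hu1
  have hK1 : 0 < r / (r - 1) := div_pos hr0 (by linarith)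
  have hK2 : 0 < u / (u - 1) := div_pos hu0 (by linarith)
  have hβα : β / α ≤ 2 := by rw [div_le_iff₀ hα]; linarith
  clear_value r u M
  refine ⟨2 * (cβ * cγ) * (r/(r-1))^2 * s ^ (γ - β) * M ^ ((γ - β)/α)
      + cγ * (u/(u-1)) * u * M ^ (γ/α) * M ^ (2 - β/α), ?_, ?_⟩
  · have h1 : 0 < s ^ (γ - β) := Real.rpow_pos_of_pos hs0 _
    have h2 : 0 < M ^ ((γ - β)/α) := Real.rpow_pos_of_pos hM0 _
    have h3 : 0 < M ^ (γ/α) := Real.rpow_pos_of_pos hM0 _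
    have h4 : 0 < M ^ (2 - β/α) := Real.rpow_pos_of_pos hM0 _
    have := mul_pos hcβ hcγ
    positivity
  intro ε hε hεM L hL V Cost hV hC N hN
  have hε0 : (0:ℝ) ≤ ε := hε.le
  have hMε : 1 < M / ε := (one_lt_div hε).mpr hεM
  have hlog0 : 0 ≤ Real.logb s (M/ε) := Real.logb_nonneg hs hMε.le
  have hLle : (L:ℝ) ≤ (1/α) * Real.logb s (M/ε) + 1 := by
    rw [hL]
    exact (Nat.ceil_lt_add_one (by positivity)).le
  have hpowlog : s ^ Real.logb s (M/ε) = M/ε :=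
    Real.rpow_logb hs0 hs.ne' (div_pos hM0 hε)
  -- key exponent bound
  have key : ∀ c : ℝ, 0 ≤ c → s ^ (c * (L:ℝ)) ≤ s ^ c * (M/ε) ^ (c/α) := by
    intro c hc
    have h2 : c * (L:ℝ) ≤ c * ((1/α) * Real.logb s (M/ε) + 1) :=
      mul_le_mul_of_nonneg_left hLle hc
    have h3 : c * ((1/α) * Real.logb s (M/ε) + 1)
        = c + Real.logb s (M/ε) * (c/α) := by field_simp; ring
    calc s ^ (c * (L:ℝ)) ≤ s ^ (c + Real.logb s (M/ε) * (c/α)) :=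
          Real.rpow_le_rpow_of_exponent_le hs.le (by linarith)
      _ = s ^ c * (s ^ Real.logb s (M/ε)) ^ (c/α) := by
          rw [Real.rpow_add hs0, ← Real.rpow_mul hs0.le]
      _ = s ^ c * (M/ε) ^ (c/α) := by rw [hpowlog]
  have hCpos : ∀ ℓ : ℕ, 0 < Cost ℓ := by
    intro ℓ; rw [hC]
    exact mul_pos hcγ (Real.rpow_pos_of_pos hs0 _)
  have hVpos : ∀ ℓ : ℕ, 0 < V ℓ := by
    intro ℓ; rw [hV]
    exact mul_pos hcβ (Real.rpow_pos_of_pos hs0 _)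
  -- product formula
  have hVC : ∀ ℓ : ℕ, V ℓ * Cost ℓ = (cβ * cγ) * s ^ ((γ - β) * (ℓ:ℝ)) := by
    intro ℓ
    rw [hV, hC, show ((γ-β) * (ℓ:ℝ)) = -(β * (ℓ:ℝ)) + γ * (ℓ:ℝ) by ring,
      Real.rpow_add hs0]
    ring
  have ha : ∀ ℓ : ℕ, Real.sqrt (V ℓ * Cost ℓ) = Real.sqrt (cβ * cγ) * r ^ ℓ := by
    intro ℓ
    rw [hVC, Real.sqrt_mul (by positivity)]
    congr 1
    rw [Real.sqrt_eq_rpow, ← Real.rpow_natCast r ℓ, hrdef,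
      ← Real.rpow_mul hs0.le, ← Real.rpow_mul hs0.le]
    congr 1
    ring
  have hCostpow : ∀ ℓ : ℕ, Cost ℓ = cγ * u ^ ℓ := by
    intro ℓ
    rw [hC, hudef, ← Real.rpow_natCast (s ^ γ) ℓ, ← Real.rpow_mul hs0.le]
  -- sqrt quotient identity
  have hq : ∀ ℓ : ℕ, Real.sqrt (V ℓ / Cost ℓ) * Cost ℓ = Real.sqrt (V ℓ * Cost ℓ) := by
    intro ℓ
    have hsc : Real.sqrt (Cost ℓ) * Real.sqrt (Cost ℓ) = Cost ℓ :=
      Real.mul_self_sqrt (hCpos ℓ).le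
    have hscne : Real.sqrt (Cost ℓ) ≠ 0 := by
      intro h
      rw [h, mul_zero] at hsc
      exact (hCpos ℓ).ne hsc
    rw [Real.sqrt_div (hVpos ℓ).le, Real.sqrt_mul (hVpos ℓ).le]
    field_simp
    linear_combination (-Real.sqrt (V ℓ)) * hsc
  set S : ℝ := ∑ i ∈ range (L + 1), Real.sqrt (V i * Cost i) with hSdef
  have hS0 : 0 ≤ S := Finset.sum_nonneg fun i _ => Real.sqrt_nonneg _
  clear_value S
  -- geometric sum bound for S
  have hSle : S ≤ Real.sqrt (cβ * cγ) * (r/(r-1)) * r ^ L := by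
    have : S = Real.sqrt (cβ * cγ) * ∑ i ∈ range (L + 1), r ^ i := by
      rw [hSdef, Finset.mul_sum]
      exact Finset.sum_congr rfl fun i _ => ha i
    rw [this]
    have hg : ∑ i ∈ range (L + 1), r ^ i = (r ^ (L+1) - 1)/(r - 1) :=
      geom_sum_eq hr1.ne' _
    have hg2 : (r ^ (L+1) - 1)/(r - 1) ≤ (r ^ L * r)/(r - 1) := by
      apply div_le_div_of_nonneg_right ?_ (by linarith)
      rw [pow_succ]; linarith [pow_pos hr0 L]
    calc Real.sqrt (cβ * cγ) * ∑ i ∈ range (L + 1), r ^ i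
        ≤ Real.sqrt (cβ * cγ) * ((r ^ L * r)/(r - 1)) := by
          rw [hg]
          exact mul_le_mul_of_nonneg_left hg2 (Real.sqrt_nonneg _)
      _ = Real.sqrt (cβ * cγ) * (r/(r-1)) * r ^ L := by ring
  -- geometric sum bound for costs
  have hCsum : ∑ ℓ ∈ range (L + 1), Cost ℓ ≤ cγ * (u/(u-1)) * u ^ L := by
    have : ∑ ℓ ∈ range (L + 1), Cost ℓ = cγ * ∑ ℓ ∈ range (L + 1), u ^ ℓ := by
      rw [Finset.mul_sum]
      exact Finset.sum_congr rfl fun i _ => hCostpow i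
    rw [this, geom_sum_eq hu1.ne' _]
    have hg2 : (u ^ (L+1) - 1)/(u - 1) ≤ (u ^ L * u)/(u - 1) := by
      apply div_le_div_of_nonneg_right ?_ (by linarith)
      rw [pow_succ]; linarith [pow_pos hu0 L]
    calc cγ * ((u ^ (L+1) - 1)/(u - 1)) ≤ cγ * ((u ^ L * u)/(u - 1)) :=
          mul_le_mul_of_nonneg_left hg2 hcγ.le
      _ = cγ * (u/(u-1)) * u ^ L := by ring
  -- step 1 : total ≤ 2 ε⁻² S² + Σ Cost
  have step1 : ∑ ℓ ∈ range (L + 1), (N ℓ : ℝ) * Cost ℓ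
      ≤ 2 * ε ^ (-2:ℝ) * S * S + ∑ ℓ ∈ range (L + 1), Cost ℓ := by
    have hterm : ∀ ℓ ∈ range (L + 1), (N ℓ : ℝ) * Cost ℓ
        ≤ 2 * ε ^ (-2:ℝ) * S * Real.sqrt (V ℓ * Cost ℓ) + Cost ℓ := by
      intro ℓ _
      have hx0 : 0 ≤ 2 * ε ^ (-2:ℝ) * Real.sqrt (V ℓ / Cost ℓ) * S := by positivity
      have hNle : (N ℓ : ℝ) ≤ 2 * ε ^ (-2:ℝ) * Real.sqrt (V ℓ / Cost ℓ) * S + 1 := by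
        rw [hN]
        exact (Nat.ceil_lt_add_one hx0).le
      calc (N ℓ : ℝ) * Cost ℓ
          ≤ (2 * ε ^ (-2:ℝ) * Real.sqrt (V ℓ / Cost ℓ) * S + 1) * Cost ℓ :=
            mul_le_mul_of_nonneg_right hNle (hCpos ℓ).le
        _ = 2 * ε ^ (-2:ℝ) * S * (Real.sqrt (V ℓ / Cost ℓ) * Cost ℓ) + Cost ℓ := by ring
        _ = 2 * ε ^ (-2:ℝ) * S * Real.sqrt (V ℓ * Cost ℓ) + Cost ℓ := by rw [hq ℓ]
    calc ∑ ℓ ∈ range (L + 1), (N ℓ : ℝ) * Cost ℓ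
        ≤ ∑ ℓ ∈ range (L + 1),
            (2 * ε ^ (-2:ℝ) * S * Real.sqrt (V ℓ * Cost ℓ) + Cost ℓ) :=
          Finset.sum_le_sum hterm
      _ = 2 * ε ^ (-2:ℝ) * S * S + ∑ ℓ ∈ range (L + 1), Cost ℓ := by
          rw [Finset.sum_add_distrib, ← Finset.mul_sum, ← hSdef]
  -- rpow conversions for r^L and u^L
  have hrL : (r ^ L) * (r ^ L) = s ^ ((γ - β) * (L:ℝ)) := by
    rw [← Real.rpow_natCast r L, hrdef, ← Real.rpow_mul hs0.le,
      ← Real.rpow_add hs0]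
    congr 1
    ring
  have huL : u ^ L = s ^ (γ * (L:ℝ)) := by
    rw [← Real.rpow_natCast u L, hudef, ← Real.rpow_mul hs0.le]
  have hdiv : ∀ c : ℝ, (M/ε) ^ c = M ^ c * ε ^ (-c) := by
    intro c
    rw [Real.div_rpow hM0.le hε0, Real.rpow_neg hε0, div_eq_mul_inv]
  -- bound the two pieces
  have hS2 : S * S ≤ (cβ * cγ) * (r/(r-1))^2 * (s ^ (γ-β) * (M ^ ((γ-β)/α) * ε ^ (-((γ-β)/α)))) := by
    have h1 : S * S ≤ (Real.sqrt (cβ*cγ) * (r/(r-1)) * r ^ L)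
        * (Real.sqrt (cβ*cγ) * (r/(r-1)) * r ^ L) :=
      mul_le_mul hSle hSle hS0 (by positivity)
    have h2 : (Real.sqrt (cβ*cγ) * (r/(r-1)) * r ^ L)
        * (Real.sqrt (cβ*cγ) * (r/(r-1)) * r ^ L)
        = (cβ * cγ) * (r/(r-1))^2 * s ^ ((γ - β) * (L:ℝ)) := by
      rw [← hrL]
      have h : Real.sqrt (cβ*cγ) * Real.sqrt (cβ*cγ) = cβ * cγ :=
        Real.mul_self_sqrt (by positivity)
      linear_combination ((r/(r-1))^2 * (r ^ L * r ^ L)) * h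
    have h3 : s ^ ((γ - β) * (L:ℝ)) ≤ s ^ (γ-β) * (M/ε) ^ ((γ-β)/α) :=
      key (γ - β) (by linarith)
    calc S * S ≤ (cβ * cγ) * (r/(r-1))^2 * s ^ ((γ - β) * (L:ℝ)) := by
          rw [← h2]; exact h1
      _ ≤ (cβ * cγ) * (r/(r-1))^2 * (s ^ (γ-β) * (M/ε) ^ ((γ-β)/α)) := by
          apply mul_le_mul_of_nonneg_left h3 (by positivity)
      _ = _ := by rw [hdiv]
  have hC2 : ∑ ℓ ∈ range (L + 1), Cost ℓ
      ≤ cγ * (u/(u-1)) * u * (M ^ (γ/α) * ε ^ (-(γ/α))) := by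
    have h3 : u ^ L ≤ s ^ γ * (M/ε) ^ (γ/α) := by
      rw [huL]; exact key γ hγ.le
    calc ∑ ℓ ∈ range (L + 1), Cost ℓ ≤ cγ * (u/(u-1)) * u ^ L := hCsum
      _ ≤ cγ * (u/(u-1)) * (s ^ γ * (M/ε) ^ (γ/α)) :=
          mul_le_mul_of_nonneg_left h3 (by positivity)
      _ = cγ * (u/(u-1)) * u * (M ^ (γ/α) * ε ^ (-(γ/α))) := by
          rw [hdiv, ← hudef]; ring
  -- combine exponents
  have hε1 : ε ^ (-2:ℝ) * ε ^ (-((γ-β)/α)) = ε ^ (-2 - (γ-β)/α) := by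
    rw [← Real.rpow_add hε]; ring_nf
  have hε2 : ε ^ (-(γ/α)) ≤ M ^ (2 - β/α) * ε ^ (-2 - (γ-β)/α) := by
    have heq : ε ^ (-(γ/α)) = ε ^ (2 - β/α) * ε ^ (-2 - (γ-β)/α) := by
      rw [← Real.rpow_add hε]; congr 1; ring
    rw [heq]
    apply mul_le_mul_of_nonneg_right ?_ (Real.rpow_nonneg hε0 _)
    exact Real.rpow_le_rpow hε0 hεM.le (by linarith)
  have hεpos : 0 ≤ ε ^ (-2 - (γ-β)/α) := Real.rpow_nonneg hε0 _
  calc ∑ ℓ ∈ range (L + 1), (N ℓ : ℝ) * Cost ℓ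
      ≤ 2 * ε ^ (-2:ℝ) * S * S + ∑ ℓ ∈ range (L + 1), Cost ℓ := step1
    _ ≤ 2 * ε ^ (-2:ℝ) * ((cβ * cγ) * (r/(r-1))^2 * (s ^ (γ-β) * (M ^ ((γ-β)/α) * ε ^ (-((γ-β)/α)))))
        + cγ * (u/(u-1)) * u * (M ^ (γ/α) * ε ^ (-(γ/α))) := by
        apply add_le_add ?_ hC2
        rw [mul_assoc]
        apply mul_le_mul_of_nonneg_left hS2 (by positivity)
    _ = 2 * (cβ * cγ) * (r/(r-1))^2 * s ^ (γ-β) * M ^ ((γ-β)/α)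
          * (ε ^ (-2:ℝ) * ε ^ (-((γ-β)/α)))
        + cγ * (u/(u-1)) * u * M ^ (γ/α) * ε ^ (-(γ/α)) := by ring
    _ ≤ 2 * (cβ * cγ) * (r/(r-1))^2 * s ^ (γ-β) * M ^ ((γ-β)/α)
          * ε ^ (-2 - (γ-β)/α)
        + cγ * (u/(u-1)) * u * M ^ (γ/α)
          * (M ^ (2 - β/α) * ε ^ (-2 - (γ-β)/α)) := by
        rw [hε1]
        apply add_le_add le_rfl
        apply mul_le_mul_of_nonneg_left hε2 (by positivity)
    _ = (2 * (cβ * cγ) * (r/(r-1))^2 * s ^ (γ - β) * M ^ ((γ - β)/α)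
        + cγ * (u/(u-1)) * u * M ^ (γ/α) * M ^ (2 - β/α)) * ε ^ (-2 - (γ-β)/α) := by
        ring
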